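/- Let (Ω, μ) be a probability space carrying finitely-valued random variables: W taking values in a finite set 𝒲 with μ(W = w) > 0 for every w ∈ 𝒲; messages X = (X_1, …, X_K); queries Q_1, …, Q_N; and answers A_1, …, A_N, with N ≥ 1. Assume: (privacy) for each n ∈ {1, …, N}, the triple (A_n, Q_n, X) is independent of W; (determinism) for each n and each w ∈ 𝒲, H(A_n | (Q_n, X) ; μ[|W = w]) = 0; and (query independence) for each w ∈ 𝒲, I((Q_1, …, Q_N) ; X ; μ[|W = w]) = 0. Then for every subset U ⊆ {1, …, K} and all w, w' ∈ 𝒲, one has H((A_1, …, A_N) | ((Q_1, …, Q_N), (X_i)_{i∈U}) ; μ[|W = w]) ≥ (1/N) · H((A_1, …, A_N) | ((Q_1, …, Q_N), (X_i)_{i∈U}) ; μ[|W = w']). -/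
import Mathlib


open MeasureTheory ProbabilityTheory

/-- Shannon entropy (natural logarithm) of a finitely-valued random variable. -/
noncomputable def rvH {Ω : Type*} [MeasurableSpace Ω] {S : Type*} [Fintype S]
    (μ : Measure Ω) (Y : Ω → S) : ℝ :=
  ∑ s : S, Real.negMulLog ((μ (Y ⁻¹' {s})).toReal)

/-- Conditional Shannon entropy `H(Y | Z)`. -/
noncomputable def rvCondH {Ω : Type*} [MeasurableSpace Ω] {S T : Type*} [Fintype S] [Fintype T]
    (μ : Measure Ω) (Y : Ω → S) (Z : Ω → T) : ℝ :=
  rvH μ (fun ω => (Y ω, Z ω)) - rvH μ Z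

/-- Mutual information `I(Y ; Z)`. -/
noncomputable def rvMI {Ω : Type*} [MeasurableSpace Ω] {S T : Type*} [Fintype S] [Fintype T]
    (μ : Measure Ω) (Y : Ω → S) (Z : Ω → T) : ℝ :=
  rvH μ Y + rvH μ Z - rvH μ (fun ω => (Y ω, Z ω))

/-- Independence of two finitely-valued random variables. -/
def rvIndep {Ω : Type*} [MeasurableSpace Ω] {S T : Type*}
    (μ : Measure Ω) (Y : Ω → S) (Z : Ω → T) : Prop :=
  ∀ (s : S) (t : T), μ (Y ⁻¹' {s} ∩ Z ⁻¹' {t}) = μ (Y ⁻¹' {s}) * μ (Z ⁻¹' {t})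

/-- Measurability of a random variable with (discrete) finitely-valued codomain. -/
def DMeasurable {Ω : Type*} [MeasurableSpace Ω] {S : Type*} (Y : Ω → S) : Prop :=
  ∀ s : Set S, MeasurableSet (Y ⁻¹' s)


set_option maxHeartbeats 1000000

namespace S5

open Finset Real
open scoped Classical


variable {α β γ δ : Type*} [Fintype α]

noncomputable def fsum (p : α → ℝ) (f : α → β) (b : β) : ℝ :=
  ∑ a : α, if f a = b then p a else 0

lemma fsum_nonneg {p : α → ℝ} (hp : ∀ a, 0 ≤ p a) (f : α → β) (b : β) :
    0 ≤ fsum p f b :=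
  Finset.sum_nonneg fun a _ => by split <;> simp [hp a]

lemma fsum_comp [Fintype γ] (p : α → ℝ) (g : α → γ) (φ : γ → β) (b : β) :
    fsum p (fun a => φ (g a)) b = ∑ c : γ, if φ c = b then fsum p g c else 0 := by
  unfold fsum
  have : ∀ c : γ, (if φ c = b then (∑ a : α, if g a = c then p a else 0) else 0)
      = ∑ a : α, if g a = c then (if φ c = b then p a else 0) else 0 := by
    intro c
    split
    · rfl
    · simp
  simp_rw [this]
  rw [Finset.sum_comm]
  refine Finset.sum_congr rfl fun a _ => ?_
  have : ∀ c : γ, (if g a = c then (if φ c = b then p a else 0) else 0)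
      = if g a = c then (if φ (g a) = b then p a else 0) else 0 := by
    intro c; split <;> simp_all
  simp_rw [this]
  rw [Finset.sum_ite_eq]
  simp

lemma negMulLog_add_le {a b : ℝ} (ha : 0 ≤ a) (hb : 0 ≤ b) :
    negMulLog (a + b) ≤ negMulLog a + negMulLog b := by
  simp only [negMulLog, neg_mul]
  have h1 : a * log a ≤ a * log (a + b) := by
    rcases ha.eq_or_lt with h | h
    · simp [← h]
    · exact mul_le_mul_of_nonneg_left (Real.log_le_log h (by linarith)) ha
  have h2 : b * log b ≤ b * log (a + b) := by
    rcases hb.eq_or_lt with h | h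
    · simp [← h]
    · exact mul_le_mul_of_nonneg_left (Real.log_le_log h (by linarith)) hb
  nlinarith

lemma negMulLog_sum_le {s : Finset γ} {x : γ → ℝ} (hx : ∀ i ∈ s, 0 ≤ x i) :
    negMulLog (∑ i ∈ s, x i) ≤ ∑ i ∈ s, negMulLog (x i) := by
  induction s using Finset.cons_induction with
  | empty => simp
  | cons i s his ih =>
    rw [Finset.sum_cons, Finset.sum_cons]
    calc negMulLog (x i + ∑ j ∈ s, x j)
        ≤ negMulLog (x i) + negMulLog (∑ j ∈ s, x j) :=
          negMulLog_add_le (hx i (Finset.mem_cons_self i s))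
            (Finset.sum_nonneg fun j hj => hx j (Finset.mem_cons_of_mem hj))
      _ ≤ negMulLog (x i) + ∑ j ∈ s, negMulLog (x j) := by
          have := ih fun j hj => hx j (Finset.mem_cons_of_mem hj)
          linarith

noncomputable def Hf (p : α → ℝ) [Fintype β] (f : α → β) : ℝ :=
  ∑ b : β, negMulLog (fsum p f b)

lemma Hf_comp_le [Fintype β] [Fintype γ] {p : α → ℝ} (hp : ∀ a, 0 ≤ p a)
    (g : α → γ) (φ : γ → β) :
    Hf p (fun a => φ (g a)) ≤ Hf p g := by
  unfold Hf
  calc ∑ b : β, negMulLog (fsum p (fun a => φ (g a)) b)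
      ≤ ∑ b : β, ∑ c : γ, (if φ c = b then negMulLog (fsum p g c) else 0) := by
        refine Finset.sum_le_sum fun b _ => ?_
        rw [fsum_comp]
        refine le_trans (negMulLog_sum_le fun c _ => ?_) ?_
        · split
          · exact fsum_nonneg hp g c
          · exact le_rfl
        · refine le_of_eq (Finset.sum_congr rfl fun c _ => ?_)
          split <;> simp
    _ = ∑ c : γ, negMulLog (fsum p g c) := by
        rw [Finset.sum_comm]
        refine Finset.sum_congr rfl fun c _ => ?_
        rw [Finset.sum_ite_eq]
        simp

lemma Hf_comp_inj [Fintype β] [Fintype γ] (p : α → ℝ) (g : α → γ) {φ : γ → β}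
    (hφ : Function.Injective φ) :
    Hf p (fun a => φ (g a)) = Hf p g := by
  unfold Hf
  have h0 : ∀ b ∈ (univ : Finset β), b ∉ univ.image φ →
      negMulLog (fsum p (fun a => φ (g a)) b) = 0 := by
    intro b _ hb
    have : fsum p (fun a => φ (g a)) b = 0 := by
      unfold fsum
      refine Finset.sum_eq_zero fun a _ => ?_
      have : φ (g a) ≠ b := fun h => hb (Finset.mem_image.2 ⟨g a, Finset.mem_univ _, h⟩)
      simp [this]
    simp [this]
  rw [← Finset.sum_subset (Finset.subset_univ (univ.image φ)) h0]
  rw [Finset.sum_image (fun x _ y _ h => hφ h)]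
  refine Finset.sum_congr rfl fun c _ => ?_
  congr 1
  unfold fsum
  refine Finset.sum_congr rfl fun a _ => ?_
  congr 1
  exact propext ⟨fun h => hφ h, fun h => h ▸ rfl⟩


section Core
variable {β γ δ : Type*}

private lemma swapzwy [Fintype β] [Fintype γ] [Fintype δ] (F : β → γ → δ → ℝ) :
    ∑ z : γ, ∑ w : δ, ∑ y : β, F y z w = ∑ y : β, ∑ z : γ, ∑ w : δ, F y z w :=
  calc ∑ z : γ, ∑ w : δ, ∑ y : β, F y z w
      = ∑ z : γ, ∑ y : β, ∑ w : δ, F y z w :=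
        Finset.sum_congr rfl fun z _ => Finset.sum_comm
    _ = ∑ y : β, ∑ z : γ, ∑ w : δ, F y z w := Finset.sum_comm

private lemma swapw [Fintype β] [Fintype γ] [Fintype δ] (F : β → γ → δ → ℝ) :
    ∑ y : β, ∑ z : γ, ∑ w : δ, F y z w = ∑ w : δ, ∑ y : β, ∑ z : γ, F y z w :=
  calc ∑ y : β, ∑ z : γ, ∑ w : δ, F y z w
      = ∑ y : β, ∑ w : δ, ∑ z : γ, F y z w :=
        Finset.sum_congr rfl fun y _ => Finset.sum_comm
    _ = ∑ w : δ, ∑ y : β, ∑ z : γ, F y z w := Finset.sum_comm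

private lemma tripleify [Fintype β] [Fintype γ] [Fintype δ] (G : β → γ → δ → ℝ) :
    ∑ t : β × γ × δ, G t.1 t.2.1 t.2.2 = ∑ y : β, ∑ z : γ, ∑ w : δ, G y z w := by
  rw [Fintype.sum_prod_type]
  exact Finset.sum_congr rfl fun y _ => Fintype.sum_prod_type _

lemma submod_core [Fintype β] [Fintype γ] [Fintype δ] (q : β × γ × δ → ℝ)
    (hq : ∀ t, 0 ≤ q t) :
    (∑ t : β × γ × δ, negMulLog (q t)) + ∑ w : δ, negMulLog (∑ y : β, ∑ z : γ, q (y, z, w)) ≤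
      (∑ y : β, ∑ w : δ, negMulLog (∑ z : γ, q (y, z, w))) +
        ∑ z : γ, ∑ w : δ, negMulLog (∑ y : β, q (y, z, w)) := by
  set m13 : β → δ → ℝ := fun y w => ∑ z : γ, q (y, z, w) with hm13
  set m23 : γ → δ → ℝ := fun z w => ∑ y : β, q (y, z, w) with hm23
  set m3 : δ → ℝ := fun w => ∑ y : β, ∑ z : γ, q (y, z, w) with hm3
  have hm13n : ∀ y w, 0 ≤ m13 y w := fun y w => Finset.sum_nonneg fun z _ => hq _
  have hm23n : ∀ z w, 0 ≤ m23 z w := fun z w => Finset.sum_nonneg fun y _ => hq _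
  have hm3n : ∀ w, 0 ≤ m3 w :=
    fun w => Finset.sum_nonneg fun y _ => Finset.sum_nonneg fun z _ => hq _
  have hm3alt : ∀ w, m3 w = ∑ z : γ, m23 z w := fun w => Finset.sum_comm
  set b : β → γ → δ → ℝ := fun y z w => m13 y w * m23 z w / m3 w with hb
  have hbn : ∀ y z w, 0 ≤ b y z w := fun y z w =>
    div_nonneg (mul_nonneg (hm13n y w) (hm23n z w)) (hm3n w)
  -- expansions into single sums over the product type
  have E1 : (∑ y : β, ∑ w : δ, negMulLog (m13 y w))
      = ∑ t : β × γ × δ, -(q t * log (m13 t.1 t.2.2)) := by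
    rw [tripleify (fun y z w => -(q (y, z, w) * log (m13 y w)))]
    refine Finset.sum_congr rfl fun y _ => ?_
    rw [Finset.sum_comm]
    refine Finset.sum_congr rfl fun w _ => ?_
    simp only [negMulLog, neg_mul, hm13]
    rw [Finset.sum_mul, ← Finset.sum_neg_distrib]
  have E2 : (∑ z : γ, ∑ w : δ, negMulLog (m23 z w))
      = ∑ t : β × γ × δ, -(q t * log (m23 t.2.1 t.2.2)) := by
    rw [tripleify (fun y z w => -(q (y, z, w) * log (m23 z w)))]
    rw [← swapzwy (fun y z w => -(q (y, z, w) * log (m23 z w)))]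
    refine Finset.sum_congr rfl fun z _ => Finset.sum_congr rfl fun w _ => ?_
    simp only [negMulLog, neg_mul, hm23]
    rw [Finset.sum_mul, ← Finset.sum_neg_distrib]
  have E3 : (∑ w : δ, negMulLog (m3 w))
      = ∑ t : β × γ × δ, -(q t * log (m3 t.2.2)) := by
    rw [tripleify (fun y z w => -(q (y, z, w) * log (m3 w)))]
    have expand : ∀ w, negMulLog (m3 w) = ∑ y : β, ∑ z : γ, -(q (y, z, w) * log (m3 w)) := by
      intro w
      simp only [negMulLog, neg_mul, hm3]
      rw [Finset.sum_mul, ← Finset.sum_neg_distrib]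
      refine Finset.sum_congr rfl fun y _ => ?_
      rw [Finset.sum_mul, ← Finset.sum_neg_distrib]
    simp_rw [expand]
    rw [Finset.sum_comm]
    exact Finset.sum_congr rfl fun y _ => Finset.sum_comm
  -- the per-term bound
  have key : ∀ t : β × γ × δ, q t - b t.1 t.2.1 t.2.2 ≤
      q t * (log (q t) + log (m3 t.2.2) - log (m13 t.1 t.2.2) - log (m23 t.2.1 t.2.2)) := by
    rintro ⟨y, z, w⟩
    simp only
    rcases (hq (y, z, w)).eq_or_lt with h | h
    · rw [← h]
      simp only [zero_mul, zero_sub, neg_nonpos]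
      exact hbn y z w
    · have h13 : 0 < m13 y w :=
        lt_of_lt_of_le h (Finset.single_le_sum (fun z _ => hq (y, z, w)) (mem_univ z))
      have h23 : 0 < m23 z w :=
        lt_of_lt_of_le h (Finset.single_le_sum (fun y _ => hq (y, z, w)) (mem_univ y))
      have h3 : 0 < m3 w :=
        lt_of_lt_of_le h13 (Finset.single_le_sum (fun y _ => hm13n y w) (mem_univ y))
      have hbpos : 0 < b y z w := by
        rw [hb]; exact div_pos (mul_pos h13 h23) h3
      have hlogb : log (b y z w) = log (m13 y w) + log (m23 z w) - log (m3 w) := by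
        rw [hb]
        simp only
        rw [Real.log_div (by positivity) h3.ne', Real.log_mul h13.ne' h23.ne']
      have h4 : log (b y z w / q (y, z, w)) = log (b y z w) - log (q (y, z, w)) :=
        Real.log_div hbpos.ne' h.ne'
      have h1 : log (b y z w / q (y, z, w)) ≤ b y z w / q (y, z, w) - 1 :=
        Real.log_le_sub_one_of_pos (by positivity)
      have h2 : q (y, z, w) * log (b y z w / q (y, z, w)) ≤
          q (y, z, w) * (b y z w / q (y, z, w) - 1) :=
        mul_le_mul_of_nonneg_left h1 h.le
      have h5 : q (y, z, w) * (b y z w / q (y, z, w) - 1) = b y z w - q (y, z, w) := by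
        field_simp
      have h6 : q (y, z, w) * (log (q (y, z, w)) + log (m3 w) - log (m13 y w) - log (m23 z w))
          = -(q (y, z, w) * log (b y z w / q (y, z, w))) := by
        rw [h4, hlogb]; ring
      rw [h6]; linarith
  -- total masses agree
  have sumq : ∑ t : β × γ × δ, q t = ∑ w : δ, m3 w := by
    have : ∑ t : β × γ × δ, q t = ∑ y : β, ∑ z : γ, ∑ w : δ, q (y, z, w) :=
      tripleify (fun y z w => q (y, z, w))
    rw [this, swapw (fun y z w => q (y, z, w))]
  have sumb : ∑ t : β × γ × δ, b t.1 t.2.1 t.2.2 = ∑ w : δ, m3 w := by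
    rw [tripleify b]
    have step : ∑ y : β, ∑ z : γ, ∑ w : δ, b y z w = ∑ w : δ, ∑ z : γ, ∑ y : β, b y z w := by
      rw [swapw b]
      exact Finset.sum_congr rfl fun w _ => Finset.sum_comm
    rw [step]
    refine Finset.sum_congr rfl fun w _ => ?_
    rcases (hm3n w).eq_or_lt with h | h
    · have hz : ∀ y, m13 y w = 0 := by
        intro y
        have h0 : ∑ y : β, m13 y w = 0 := h.symm
        exact (Finset.sum_eq_zero_iff_of_nonneg fun y _ => hm13n y w).1 h0 y (mem_univ y)
      have hbz : ∀ z y, b y z w = 0 := fun z y => by rw [hb]; simp [hz y]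
      simp only [hbz, Finset.sum_const_zero]
      exact h
    · have hne : m3 w ≠ 0 := h.ne'
      have hzsum : ∀ z : γ, ∑ y : β, b y z w = m23 z w := by
        intro z
        have hh : ∀ y, b y z w = m13 y w * (m23 z w / m3 w) := fun y => by rw [hb]; ring
        simp_rw [hh]
        rw [← Finset.sum_mul]
        have : (∑ y : β, m13 y w) = m3 w := rfl
        rw [this]
        field_simp
      simp_rw [hzsum]
      exact (hm3alt w).symm
  -- assemble
  have hS : 0 ≤ ∑ t : β × γ × δ,
      q t * (log (q t) + log (m3 t.2.2) - log (m13 t.1 t.2.2) - log (m23 t.2.1 t.2.2)) := by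
    have h0 : (0:ℝ) = ∑ t : β × γ × δ, (q t - b t.1 t.2.1 t.2.2) := by
      rw [Finset.sum_sub_distrib, sumq, sumb]; ring
    rw [h0]
    exact Finset.sum_le_sum fun t _ => key t
  have I : ∑ t : β × γ × δ,
        q t * (log (q t) + log (m3 t.2.2) - log (m13 t.1 t.2.2) - log (m23 t.2.1 t.2.2))
      = (∑ t : β × γ × δ, -(q t * log (m13 t.1 t.2.2)))
        + (∑ t : β × γ × δ, -(q t * log (m23 t.2.1 t.2.2)))
        - (∑ t : β × γ × δ, negMulLog (q t))
        - (∑ t : β × γ × δ, -(q t * log (m3 t.2.2))) := by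
    rw [← Finset.sum_add_distrib, ← Finset.sum_sub_distrib, ← Finset.sum_sub_distrib]
    refine Finset.sum_congr rfl fun t _ => ?_
    simp only [negMulLog, neg_mul]
    ring
  rw [E1, E2, E3] at *
  linarith [hS, I]
end Core

section Tool
variable {α β γ δ ε : Type*} [Fintype α] [Fintype β] [Fintype γ] [Fintype δ] [Fintype ε]

lemma Hf_submod {p : α → ℝ} (hp : ∀ a, 0 ≤ p a) (f : α → β) (g : α → γ) (c : α → δ) :
    Hf p (fun a => (f a, g a, c a)) + Hf p c ≤
      Hf p (fun a => (f a, c a)) + Hf p (fun a => (g a, c a)) := by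
  set q : β × γ × δ → ℝ := fsum p (fun a => (f a, g a, c a)) with hq
  have hqn : ∀ t, 0 ≤ q t := fun t => fsum_nonneg hp _ t
  have core := submod_core q hqn
  have i0 : Hf p (fun a => (f a, g a, c a)) = ∑ t : β × γ × δ, negMulLog (q t) := rfl
  have ifc : Hf p (fun a => (f a, c a))
      = ∑ y : β, ∑ w : δ, negMulLog (∑ z : γ, q (y, z, w)) := by
    unfold Hf
    rw [Fintype.sum_prod_type]
    refine Finset.sum_congr rfl fun y _ => Finset.sum_congr rfl fun w _ => ?_
    congr 1
    refine Eq.trans (fsum_comp p (fun a => (f a, g a, c a)) (fun t => (t.1, t.2.2)) (y, w)) ?_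
    rw [← hq, Fintype.sum_prod_type]
    simp only [Prod.mk.injEq, ite_and, Fintype.sum_prod_type]
    rw [show (∑ x : β, ∑ z : γ, ∑ u : δ, if x = y then if u = w then q (x, z, u) else 0 else 0)
        = ∑ x : β, if x = y then (∑ z : γ, ∑ u : δ, if u = w then q (x, z, u) else 0) else 0 from
      Finset.sum_congr rfl fun x _ => by split <;> simp]
    rw [Finset.sum_ite_eq' univ y]
    simp [Finset.sum_ite_eq' univ w]
  have igc : Hf p (fun a => (g a, c a))
      = ∑ z : γ, ∑ w : δ, negMulLog (∑ y : β, q (y, z, w)) := by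
    unfold Hf
    rw [Fintype.sum_prod_type]
    refine Finset.sum_congr rfl fun z _ => Finset.sum_congr rfl fun w _ => ?_
    congr 1
    refine Eq.trans (fsum_comp p (fun a => (f a, g a, c a)) (fun t => (t.2.1, t.2.2)) (z, w)) ?_
    rw [← hq, Fintype.sum_prod_type]
    simp only [Prod.mk.injEq, ite_and, Fintype.sum_prod_type]
    rw [show (∑ x : β, ∑ u : γ, ∑ v : δ, if u = z then if v = w then q (x, u, v) else 0 else 0)
        = ∑ x : β, ∑ u : γ, if u = z then (∑ v : δ, if v = w then q (x, u, v) else 0) else 0 from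
      Finset.sum_congr rfl fun x _ => Finset.sum_congr rfl fun u _ => by split <;> simp]
    rw [show (∑ x : β, ∑ u : γ, if u = z then (∑ v : δ, if v = w then q (x, u, v) else 0) else 0)
        = ∑ x : β, ∑ v : δ, if v = w then q (x, z, v) else 0 from
      Finset.sum_congr rfl fun x _ => by rw [Finset.sum_ite_eq' univ z]; simp]
    simp [Finset.sum_ite_eq' univ w]
  have ic : Hf p c = ∑ w : δ, negMulLog (∑ y : β, ∑ z : γ, q (y, z, w)) := by
    unfold Hf
    refine Finset.sum_congr rfl fun w _ => ?_
    congr 1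
    refine Eq.trans (fsum_comp p (fun a => (f a, g a, c a)) (fun t => t.2.2) w) ?_
    rw [← hq, Fintype.sum_prod_type]
    simp only [Fintype.sum_prod_type]
    simp [Finset.sum_ite_eq' univ w]
  rw [i0, ifc, igc, ic]
  exact core

noncomputable def cHf (p : α → ℝ) (f : α → β) (c : α → γ) : ℝ :=
  Hf p (fun a => (f a, c a)) - Hf p c

lemma cHf_nonneg {p : α → ℝ} (hp : ∀ a, 0 ≤ p a) (f : α → β) (c : α → γ) :
    0 ≤ cHf p f c := by
  have h : Hf p (fun a => Prod.snd ((fun a => (f a, c a)) a)) ≤ Hf p (fun a => (f a, c a)) :=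
    Hf_comp_le hp (fun a => (f a, c a)) Prod.snd
  have h2 : Hf p c ≤ Hf p (fun a => (f a, c a)) := h
  unfold cHf
  linarith

lemma cHf_cond_le {p : α → ℝ} (hp : ∀ a, 0 ≤ p a) (f : α → β) (g : α → γ) (c : α → δ) :
    cHf p f (fun a => (g a, c a)) ≤ cHf p f c := by
  have core := Hf_submod hp f g c
  unfold cHf
  linarith

lemma cHf_congr_left {p : α → ℝ} (f : α → β) (c : α → δ) {φ : β → γ}
    (hφ : Function.Injective φ) :
    cHf p (fun a => φ (f a)) c = cHf p f c := by
  unfold cHf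
  have h : Hf p (fun a => (Prod.map φ id) ((fun a => (f a, c a)) a)) = Hf p (fun a => (f a, c a)) :=
    Hf_comp_inj p (fun a => (f a, c a)) (hφ.prodMap Function.injective_id)
  have h2 : Hf p (fun a => (φ (f a), c a)) = Hf p (fun a => (f a, c a)) := h
  rw [h2]

lemma cHf_congr_right {p : α → ℝ} (f : α → β) (c : α → δ) {ψ : δ → γ}
    (hψ : Function.Injective ψ) :
    cHf p f (fun a => ψ (c a)) = cHf p f c := by
  unfold cHf
  have h : Hf p (fun a => (Prod.map id ψ) ((fun a => (f a, c a)) a)) = Hf p (fun a => (f a, c a)) :=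
    Hf_comp_inj p (fun a => (f a, c a)) (Function.injective_id.prodMap hψ)
  have h2 : Hf p (fun a => (f a, ψ (c a))) = Hf p (fun a => (f a, c a)) := h
  have h3 : Hf p (fun a => ψ (c a)) = Hf p c := Hf_comp_inj p c hψ
  rw [h2, h3]

lemma cHf_comp_le_left {p : α → ℝ} (hp : ∀ a, 0 ≤ p a) (f : α → β) (c : α → δ) (φ : β → γ) :
    cHf p (fun a => φ (f a)) c ≤ cHf p f c := by
  unfold cHf
  have h : Hf p (fun a => (Prod.map φ id) ((fun a => (f a, c a)) a)) ≤ Hf p (fun a => (f a, c a)) :=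
    Hf_comp_le hp (fun a => (f a, c a)) (Prod.map φ id)
  have h2 : Hf p (fun a => (φ (f a), c a)) ≤ Hf p (fun a => (f a, c a)) := h
  linarith

lemma Hf_assoc {p : α → ℝ} (f : α → β) (g : α → γ) (c : α → δ) :
    Hf p (fun a => ((f a, g a), c a)) = Hf p (fun a => (f a, g a, c a)) := by
  have hφ : Function.Injective (fun x : β × γ × δ => ((x.1, x.2.1), x.2.2)) := by
    rintro ⟨a, b, c⟩ ⟨d, e, f⟩ h
    simp only [Prod.mk.injEq] at h
    simp [Prod.ext_iff, h.1.1, h.1.2, h.2]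
  exact Hf_comp_inj p (fun a => (f a, g a, c a)) hφ

lemma cHf_pair {p : α → ℝ} (f : α → β) (g : α → γ) (c : α → δ) :
    cHf p (fun a => (f a, g a)) c = cHf p g c + cHf p f (fun a => (g a, c a)) := by
  unfold cHf
  rw [Hf_assoc]
  ring

noncomputable def cMI (p : α → ℝ) (f : α → β) (g : α → γ) (c : α → δ) : ℝ :=
  cHf p f c - cHf p f (fun a => (g a, c a))

lemma cMI_nonneg {p : α → ℝ} (hp : ∀ a, 0 ≤ p a) (f : α → β) (g : α → γ) (c : α → δ) :
    0 ≤ cMI p f g c :=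
  sub_nonneg.2 (cHf_cond_le hp f g c)

lemma cMI_le_cHf {p : α → ℝ} (hp : ∀ a, 0 ≤ p a) (f : α → β) (g : α → γ) (c : α → δ) :
    cMI p f g c ≤ cHf p f c := by
  have := cHf_nonneg hp f (fun a => (g a, c a))
  unfold cMI
  linarith

lemma Hf_swap_mid {p : α → ℝ} (f : α → β) (g : α → γ) (c : α → δ) :
    Hf p (fun a => (f a, g a, c a)) = Hf p (fun a => (g a, f a, c a)) := by
  have hφ : Function.Injective (fun x : γ × β × δ => ((x.2.1, x.1, x.2.2) : β × γ × δ)) := by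
    rintro ⟨a, b, c⟩ ⟨d, e, f⟩ h
    simp only [Prod.mk.injEq] at h
    simp [Prod.ext_iff, h.1, h.2.1, h.2.2]
  exact Hf_comp_inj p (fun a => (g a, f a, c a)) hφ

lemma cMI_sym {p : α → ℝ} (f : α → β) (g : α → γ) (c : α → δ) :
    cMI p f g c = cMI p g f c := by
  unfold cMI cHf
  rw [Hf_swap_mid f g c]
  ring

lemma cMI_congr_left {p : α → ℝ} (f : α → β) (g : α → δ) (c : α → ε) {φ : β → γ}
    (hφ : Function.Injective φ) :
    cMI p (fun a => φ (f a)) g c = cMI p f g c := by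
  unfold cMI
  rw [cHf_congr_left f c hφ, cHf_congr_left f (fun a => (g a, c a)) hφ]

lemma cMI_congr_cond {p : α → ℝ} (f : α → β) (g : α → δ) (c : α → ε) {ψ : ε → γ}
    (hψ : Function.Injective ψ) :
    cMI p f g (fun a => ψ (c a)) = cMI p f g c := by
  unfold cMI
  rw [cHf_congr_right f c hψ]
  have h : cHf p f (fun a => (Prod.map id ψ) ((fun a => (g a, c a)) a))
      = cHf p f (fun a => (g a, c a)) :=
    cHf_congr_right f (fun a => (g a, c a)) (Function.injective_id.prodMap hψ)
  have h2 : cHf p f (fun a => (g a, ψ (c a))) = cHf p f (fun a => (g a, c a)) := h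
  rw [h2]

lemma cMI_chain {p : α → ℝ} (f : α → β) (f' : α → γ) (g : α → δ) (c : α → ε) :
    cMI p (fun a => (f a, f' a)) g c = cMI p f' g c + cMI p f g (fun a => (f' a, c a)) := by
  unfold cMI
  rw [cHf_pair f f' c, cHf_pair f f' (fun a => (g a, c a))]
  have hφ : Function.Injective
      (fun x : γ × δ × ε => ((x.2.1, x.1, x.2.2) : δ × γ × ε)) := by
    rintro ⟨a, b, c⟩ ⟨d, e, f⟩ h
    simp only [Prod.mk.injEq] at h
    simp [Prod.ext_iff, h.1, h.2.1, h.2.2]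
  have h2 : cHf p f (fun a => (g a, f' a, c a)) = cHf p f (fun a => (f' a, g a, c a)) :=
    cHf_congr_right f (fun a => (f' a, g a, c a)) hφ
  rw [h2]
  ring

lemma cHf_tuple_le {m : ℕ} {p : α → ℝ} (hp : ∀ a, 0 ≤ p a) (F : Fin m → α → β) (c : α → γ) :
    cHf p (fun a => fun n => F n a) c ≤ ∑ n : Fin m, cHf p (F n) c := by
  induction m with
  | zero =>
    simp only [Finset.univ_eq_empty, Finset.sum_empty]
    have h2 : cHf p c c = 0 := by
      unfold cHf
      have hdup : Function.Injective (fun x : γ => (x, x)) := by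
        intro x y h
        exact (Prod.ext_iff.1 h).1
      have h3 : Hf p (fun a => (c a, c a)) = Hf p c := Hf_comp_inj p c hdup
      rw [h3]
      ring
    have h : cHf p (fun a => fun n : Fin 0 => F n a) c ≤ cHf p c c := by
      have he : (fun a => fun n : Fin 0 => F n a)
          = fun a => (fun _x : γ => (fun n : Fin 0 => n.elim0 : Fin 0 → β)) (c a) := by
        funext a n
        exact n.elim0
      rw [he]
      exact cHf_comp_le_left hp c c (fun _x : γ => (fun n : Fin 0 => n.elim0 : Fin 0 → β))
    linarith
  | succ m ih =>
    have hφ : Function.Injective (fun v : Fin (m + 1) → β => (v 0, fun j : Fin m => v j.succ)) := by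
      intro u v h
      simp only [Prod.mk.injEq] at h
      funext i
      refine Fin.cases ?_ ?_ i
      · exact h.1
      · intro j
        exact congrFun h.2 j
    have e1 : cHf p (fun a => (F 0 a, fun j : Fin m => F j.succ a)) c
        = cHf p (fun a => fun n => F n a) c :=
      cHf_congr_left (fun a => fun n => F n a) c hφ
    rw [← e1, cHf_pair]
    have h1 : cHf p (fun a => fun j : Fin m => F j.succ a) c
        ≤ ∑ j : Fin m, cHf p (F j.succ) c := ih (fun j => F j.succ)
    have h2 : cHf p (F 0) (fun a => ((fun j : Fin m => F j.succ a), c a)) ≤ cHf p (F 0) c :=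
      cHf_cond_le hp (F 0) _ c
    rw [Fin.sum_univ_succ]
    linarith

lemma Hf_unit {p : α → ℝ} (hp1 : ∑ a : α, p a = 1) :
    Hf p (fun _ => ()) = 0 := by
  unfold Hf fsum
  simp [hp1]

lemma cMI_unit {p : α → ℝ} (hp1 : ∑ a : α, p a = 1) (f : α → β) (g : α → γ) :
    cMI p f g (fun _ => ()) = Hf p f + Hf p g - Hf p (fun a => (f a, g a)) := by
  unfold cMI cHf
  have hφ1 : Function.Injective (fun x : β => (x, ())) := fun x y h => (Prod.ext_iff.1 h).1
  have hφ2 : Function.Injective (fun x : γ => (x, ())) := fun x y h => (Prod.ext_iff.1 h).1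
  have h1 : Hf p (fun a => (f a, ())) = Hf p f := Hf_comp_inj p f hφ1
  have h2 : Hf p (fun a => (g a, ())) = Hf p g := Hf_comp_inj p g hφ2
  have h3 : Hf p (fun a => (f a, (g a, ()))) = Hf p (fun a => (f a, g a)) := by
    have hφ : Function.Injective (fun x : β × γ => (x.1, (x.2, ()))) := by
      rintro ⟨a, b⟩ ⟨d, e⟩ h
      simpa [Prod.ext_iff] using h
    exact Hf_comp_inj p (fun a => (f a, g a)) hφ
  rw [h1, h2, h3, Hf_unit hp1]
  ring

end Tool

lemma cHf_def {α β γ : Type*} [Fintype α] [Fintype β] [Fintype γ] (p : α → ℝ) (f : α → β) (c : α → γ) :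
  cHf p f c = Hf p (fun a => (f a, c a)) - Hf p c := rfl

lemma cMI_def {α β γ δ : Type*} [Fintype α] [Fintype β] [Fintype γ] [Fintype δ] (p : α → ℝ) (f : α → β) (g : α → γ) (c : α → δ) :
  cMI p f g c = cHf p f c - cHf p f (fun a => (g a, c a)) := rfl

attribute [irreducible] fsum Hf cHf cMI

section Master
variable {A' Q' X' : Type*} [Fintype A'] [Fintype Q'] [Fintype X'] {N K : ℕ}

lemma chainA (U : Finset (Fin K))
    (p : (Fin N → A') × (Fin N → Q') × (Fin K → X') → ℝ) (hp : ∀ v, 0 ≤ p v) :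
    cHf p (fun v => v.1) (fun v => (v.2.1, fun i : U => v.2.2 i.1)) ≤
      ∑ n : Fin N, cHf p (fun v => v.1 n) (fun v => (v.2.1 n, fun i : U => v.2.2 i.1)) := by
  have a1 : cHf p (fun v => v.1) (fun v => (v.2.1, fun i : U => v.2.2 i.1)) ≤
      ∑ n : Fin N, cHf p (fun v => v.1 n) (fun v => (v.2.1, fun i : U => v.2.2 i.1)) :=
    cHf_tuple_le hp (fun n => fun v => v.1 n) (fun v => (v.2.1, fun i : U => v.2.2 i.1))
  have a2 : ∀ n : Fin N, cHf p (fun v => v.1 n) (fun v => (v.2.1, fun i : U => v.2.2 i.1)) ≤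
      cHf p (fun v => v.1 n) (fun v => (v.2.1 n, fun i : U => v.2.2 i.1)) := by
    intro n
    have hψ : Function.Injective
        (fun t : (Fin N → Q') × ({i : Fin K // i ∈ U} → X') =>
          (t, (t.1 n, t.2))) := fun x y h => (Prod.ext_iff.1 h).1
    have s2 : cHf p (fun v => v.1 n)
        (fun v => ((v.2.1, fun i : U => v.2.2 i.1), (v.2.1 n, fun i : U => v.2.2 i.1)))
        = cHf p (fun v => v.1 n) (fun v => (v.2.1, fun i : U => v.2.2 i.1)) :=
      cHf_congr_right (p := p)
        (ψ := fun t : (Fin N → Q') × ({i : Fin K // i ∈ U} → X') => (t, (t.1 n, t.2)))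
        (fun v => v.1 n) (fun v => (v.2.1, fun i : U => v.2.2 i.1)) hψ
    have s1 : cHf p (fun v => v.1 n)
        (fun v => ((v.2.1, fun i : U => v.2.2 i.1), (v.2.1 n, fun i : U => v.2.2 i.1)))
        ≤ cHf p (fun v => v.1 n) (fun v => (v.2.1 n, fun i : U => v.2.2 i.1)) :=
      cHf_cond_le hp (fun v => v.1 n) (fun v => (v.2.1, fun i : U => v.2.2 i.1))
        (fun v => (v.2.1 n, fun i : U => v.2.2 i.1))
    linarith
  exact le_trans a1 (Finset.sum_le_sum fun n _ => a2 n)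

lemma chainB (U : Finset (Fin K))
    (p : (Fin N → A') × (Fin N → Q') × (Fin K → X') → ℝ) (hp : ∀ v, 0 ≤ p v)
    (hp1 : ∑ v, p v = 1)
    (hdetp : ∀ n : Fin N, cHf p (fun v => v.1 n) (fun v => (v.2.1 n, v.2.2)) = 0)
    (hqip : Hf p (fun v => v.2.1) + Hf p (fun v => v.2.2)
      - Hf p (fun v => (v.2.1, v.2.2)) = 0)
    (n : Fin N) :
    cHf p (fun v => v.1 n) (fun v => (v.2.1 n, fun i : U => v.2.2 i.1)) ≤
      cHf p (fun v => v.1) (fun v => (v.2.1, fun i : U => v.2.2 i.1)) := by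
  -- abbreviations are written out explicitly everywhere
  -- Step t2 : I(A_n ; Q | X_rest, Q_n, X_U) = 0 (≤ 0)
  have hsplitpair : Function.Injective
      (fun t : Q' × (Fin K → X') =>
        ((fun i : {i : Fin K // i ∉ U} => t.2 i.1), (t.1, fun i : U => t.2 i.1))) := by
    rintro ⟨q, x⟩ ⟨q', x'⟩ h
    simp only [Prod.mk.injEq] at h
    refine Prod.ext h.2.1 (funext fun i => ?_)
    by_cases hi : i ∈ U
    · exact congrFun h.2.2 ⟨i, hi⟩
    · exact congrFun h.1 ⟨i, hi⟩
  have t2a : cMI p (fun v => v.1 n) (fun v => v.2.1)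
      (fun v => ((fun i : {i : Fin K // i ∉ U} => v.2.2 i.1),
        (v.2.1 n, fun i : U => v.2.2 i.1)))
      ≤ cHf p (fun v => v.1 n)
      (fun v => ((fun i : {i : Fin K // i ∉ U} => v.2.2 i.1),
        (v.2.1 n, fun i : U => v.2.2 i.1))) :=
    cMI_le_cHf hp _ _ _
  have t2b : cHf p (fun v => v.1 n)
      (fun v => ((fun i : {i : Fin K // i ∉ U} => v.2.2 i.1),
        (v.2.1 n, fun i : U => v.2.2 i.1)))
      = cHf p (fun v => v.1 n) (fun v => (v.2.1 n, v.2.2)) :=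
    cHf_congr_right (p := p) (fun v => v.1 n) (fun v => (v.2.1 n, v.2.2)) hsplitpair
  have t2 : cMI p (fun v => v.1 n) (fun v => v.2.1)
      (fun v => ((fun i : {i : Fin K // i ∉ U} => v.2.2 i.1),
        (v.2.1 n, fun i : U => v.2.2 i.1))) ≤ 0 := by
    rw [t2b] at t2a
    rw [hdetp n] at t2a
    exact t2a
  -- chain decomposition of I((X_rest, A_n) ; Q | Q_n, X_U)
  have c1 : cMI p (fun v => ((fun i : {i : Fin K // i ∉ U} => v.2.2 i.1), v.1 n))
      (fun v => v.2.1) (fun v => (v.2.1 n, fun i : U => v.2.2 i.1))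
      = cMI p (fun v => v.1 n) (fun v => v.2.1) (fun v => (v.2.1 n, fun i : U => v.2.2 i.1))
        + cMI p (fun v => (fun i : {i : Fin K // i ∉ U} => v.2.2 i.1)) (fun v => v.2.1)
            (fun v => (v.1 n, (v.2.1 n, fun i : U => v.2.2 i.1))) :=
    cMI_chain (p := p) _ _ _ _
  have c2 : cMI p (fun v => ((fun i : {i : Fin K // i ∉ U} => v.2.2 i.1), v.1 n))
      (fun v => v.2.1) (fun v => (v.2.1 n, fun i : U => v.2.2 i.1))
      = cMI p (fun v => (v.1 n, (fun i : {i : Fin K // i ∉ U} => v.2.2 i.1)))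
          (fun v => v.2.1) (fun v => (v.2.1 n, fun i : U => v.2.2 i.1)) := by
    have h := cMI_congr_left (p := p)
      (fun v => ((v.1 n : A'), (fun i : {i : Fin K // i ∉ U} => v.2.2 i.1)))
      (fun v => v.2.1) (fun v => (v.2.1 n, fun i : U => v.2.2 i.1))
      (φ := Prod.swap) Prod.swap_injective
    exact h
  have c3 : cMI p (fun v => (v.1 n, (fun i : {i : Fin K // i ∉ U} => v.2.2 i.1)))
      (fun v => v.2.1) (fun v => (v.2.1 n, fun i : U => v.2.2 i.1))
      = cMI p (fun v => (fun i : {i : Fin K // i ∉ U} => v.2.2 i.1)) (fun v => v.2.1)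
          (fun v => (v.2.1 n, fun i : U => v.2.2 i.1))
        + cMI p (fun v => v.1 n) (fun v => v.2.1)
            (fun v => ((fun i : {i : Fin K // i ∉ U} => v.2.2 i.1),
              (v.2.1 n, fun i : U => v.2.2 i.1))) :=
    cMI_chain (p := p) _ _ _ _
  -- Step t1 : I(X_rest ; Q | Q_n, X_U) ≤ 0
  have s1 : cMI p (fun v => (fun i : {i : Fin K // i ∉ U} => v.2.2 i.1)) (fun v => v.2.1)
      (fun v => (v.2.1 n, fun i : U => v.2.2 i.1))
      = cMI p (fun v => v.2.1) (fun v => (fun i : {i : Fin K // i ∉ U} => v.2.2 i.1))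
          (fun v => (v.2.1 n, fun i : U => v.2.2 i.1)) := cMI_sym (p := p) _ _ _
  have s2 : cMI p (fun v => (v.2.1, v.2.1 n))
      (fun v => (fun i : {i : Fin K // i ∉ U} => v.2.2 i.1)) (fun v => (fun i : U => v.2.2 i.1))
      = cMI p (fun v => v.2.1 n) (fun v => (fun i : {i : Fin K // i ∉ U} => v.2.2 i.1))
          (fun v => (fun i : U => v.2.2 i.1))
        + cMI p (fun v => v.2.1) (fun v => (fun i : {i : Fin K // i ∉ U} => v.2.2 i.1))
            (fun v => (v.2.1 n, fun i : U => v.2.2 i.1)) :=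
    cMI_chain (p := p) _ _ _ _
  have s3 : cMI p (fun v => (v.2.1, v.2.1 n))
      (fun v => (fun i : {i : Fin K // i ∉ U} => v.2.2 i.1)) (fun v => (fun i : U => v.2.2 i.1))
      = cMI p (fun v => v.2.1)
          (fun v => (fun i : {i : Fin K // i ∉ U} => v.2.2 i.1))
          (fun v => (fun i : U => v.2.2 i.1)) := by
    have hφ : Function.Injective (fun q : Fin N → Q' => (q, q n)) :=
      fun x y h => (Prod.ext_iff.1 h).1
    exact cMI_congr_left (p := p) (φ := fun q : Fin N → Q' => (q, q n)) (fun v => v.2.1)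
      (fun v => (fun i : {i : Fin K // i ∉ U} => v.2.2 i.1))
      (fun v => (fun i : U => v.2.2 i.1)) hφ
  have s4 : cMI p (fun v => v.2.1) (fun v => (fun i : {i : Fin K // i ∉ U} => v.2.2 i.1))
      (fun v => (fun i : U => v.2.2 i.1))
      = cMI p (fun v => (fun i : {i : Fin K // i ∉ U} => v.2.2 i.1)) (fun v => v.2.1)
          (fun v => (fun i : U => v.2.2 i.1)) := cMI_sym (p := p) _ _ _
  have s5 : cMI p (fun v => ((fun i : {i : Fin K // i ∉ U} => v.2.2 i.1),
        (fun i : U => v.2.2 i.1))) (fun v => v.2.1) (fun _ => ())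
      = cMI p (fun v => (fun i : U => v.2.2 i.1)) (fun v => v.2.1) (fun _ => ())
        + cMI p (fun v => (fun i : {i : Fin K // i ∉ U} => v.2.2 i.1)) (fun v => v.2.1)
            (fun v => ((fun i : U => v.2.2 i.1), ())) :=
    cMI_chain (p := p) _ _ _ _
  have s6 : cMI p (fun v => (fun i : {i : Fin K // i ∉ U} => v.2.2 i.1)) (fun v => v.2.1)
      (fun v => ((fun i : U => v.2.2 i.1), ()))
      = cMI p (fun v => (fun i : {i : Fin K // i ∉ U} => v.2.2 i.1)) (fun v => v.2.1)
          (fun v => (fun i : U => v.2.2 i.1)) := by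
    have hψ : Function.Injective (fun x : {i : Fin K // i ∈ U} → X' => (x, ())) :=
      fun x y h => (Prod.ext_iff.1 h).1
    exact cMI_congr_cond (p := p) (ψ := fun x : {i : Fin K // i ∈ U} → X' => (x, ()))
      (fun v => (fun i : {i : Fin K // i ∉ U} => v.2.2 i.1))
      (fun v => v.2.1) (fun v => (fun i : U => v.2.2 i.1)) hψ
  have hsplit : Function.Injective (fun x : Fin K → X' =>
      ((fun i : {i : Fin K // i ∉ U} => x i.1), (fun i : U => x i.1))) := by
    intro x x' h
    simp only [Prod.mk.injEq] at h
    funext i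
    by_cases hi : i ∈ U
    · exact congrFun h.2 ⟨i, hi⟩
    · exact congrFun h.1 ⟨i, hi⟩
  have s7 : cMI p (fun v => ((fun i : {i : Fin K // i ∉ U} => v.2.2 i.1),
        (fun i : U => v.2.2 i.1))) (fun v => v.2.1) (fun _ => ())
      = cMI p (fun v => v.2.2) (fun v => v.2.1) (fun _ => ()) :=
    cMI_congr_left (p := p) (φ := fun x : Fin K → X' =>
        ((fun i : {i : Fin K // i ∉ U} => x i.1), (fun i : U => x i.1)))
      (fun v => v.2.2) (fun v => v.2.1) (fun _ => ()) hsplit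
  have s8 : cMI p (fun v => v.2.2) (fun v => v.2.1) (fun _ => ())
      = Hf p (fun v => v.2.2) + Hf p (fun v => v.2.1) - Hf p (fun v => (v.2.2, v.2.1)) :=
    cMI_unit hp1 _ _
  have s9 : Hf p (fun v => (v.2.2, v.2.1)) = Hf p (fun v => (v.2.1, v.2.2)) :=
    Hf_comp_inj p (φ := Prod.swap) (fun v => (v.2.1, v.2.2)) Prod.swap_injective
  have n1 : 0 ≤ cMI p (fun v => v.2.1 n) (fun v => (fun i : {i : Fin K // i ∉ U} => v.2.2 i.1))
      (fun v => (fun i : U => v.2.2 i.1)) := cMI_nonneg hp _ _ _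
  have n2 : 0 ≤ cMI p (fun v => (fun i : U => v.2.2 i.1)) (fun v => v.2.1) (fun _ => ()) :=
    cMI_nonneg hp _ _ _
  have t1 : cMI p (fun v => (fun i : {i : Fin K // i ∉ U} => v.2.2 i.1)) (fun v => v.2.1)
      (fun v => (v.2.1 n, fun i : U => v.2.2 i.1)) ≤ 0 := by
    rw [s1]
    -- cMI p Qf Xr c0 = s2-chain
    have e := s2
    rw [s3] at e
    -- e : cMI Qf Xr XU = cMI Qn Xr XU + cMI Qf Xr (Qn,XU)
    have f1 : cMI p (fun v => v.2.1) (fun v => (fun i : {i : Fin K // i ∉ U} => v.2.2 i.1))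
        (fun v => (fun i : U => v.2.2 i.1))
        ≤ 0 := by
      rw [s4]
      have e2 := s5
      rw [s6, s7, s8, s9] at e2
      -- e2 : 0(hqip) = cMI XU Qf unit + cMI Xr Qf XU
      have hz : Hf p (fun v => v.2.2) + Hf p (fun v => v.2.1)
          - Hf p (fun v => (v.2.1, v.2.2)) = 0 := by linarith [hqip]
      linarith [n2, e2, hz]
    linarith [n1, e, f1]
  -- combine: cMI p An Qf c0 ≤ 0
  have main0 : cMI p (fun v => v.1 n) (fun v => v.2.1)
      (fun v => (v.2.1 n, fun i : U => v.2.2 i.1)) ≤ 0 := by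
    have nn : 0 ≤ cMI p (fun v => (fun i : {i : Fin K // i ∉ U} => v.2.2 i.1)) (fun v => v.2.1)
        (fun v => (v.1 n, (v.2.1 n, fun i : U => v.2.2 i.1))) := cMI_nonneg hp _ _ _
    linarith [c1, c2, c3, t1, t2, nn]
  -- unfold cMI into the two cHf terms
  have main1 : cHf p (fun v => v.1 n) (fun v => (v.2.1 n, fun i : U => v.2.2 i.1))
      ≤ cHf p (fun v => v.1 n)
        (fun v => (v.2.1, (v.2.1 n, fun i : U => v.2.2 i.1))) := by
    have : cMI p (fun v => v.1 n) (fun v => v.2.1)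
        (fun v => (v.2.1 n, fun i : U => v.2.2 i.1))
        = cHf p (fun v => v.1 n) (fun v => (v.2.1 n, fun i : U => v.2.2 i.1))
          - cHf p (fun v => v.1 n)
            (fun v => (v.2.1, (v.2.1 n, fun i : U => v.2.2 i.1))) :=
      cMI_def p (fun v => v.1 n) (fun v => v.2.1)
        (fun v => (v.2.1 n, fun i : U => v.2.2 i.1))
    linarith [main0, this.symm.le, this.le]
  have main2 : cHf p (fun v => v.1 n)
      (fun v => (v.2.1, (v.2.1 n, fun i : U => v.2.2 i.1)))
      = cHf p (fun v => v.1 n) (fun v => (v.2.1, fun i : U => v.2.2 i.1)) := by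
    have hψ : Function.Injective
        (fun t : (Fin N → Q') × ({i : Fin K // i ∈ U} → X') => (t.1, (t.1 n, t.2))) := by
      rintro ⟨q, x⟩ ⟨q', x'⟩ h
      simp only [Prod.mk.injEq] at h
      exact Prod.ext h.1 h.2.2
    exact cHf_congr_right (p := p)
      (ψ := fun t : (Fin N → Q') × ({i : Fin K // i ∈ U} → X') => (t.1, (t.1 n, t.2)))
      (fun v => v.1 n) (fun v => (v.2.1, fun i : U => v.2.2 i.1)) hψ
  have main3 : cHf p (fun v => v.1 n) (fun v => (v.2.1, fun i : U => v.2.2 i.1))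
      ≤ cHf p (fun v => v.1) (fun v => (v.2.1, fun i : U => v.2.2 i.1)) :=
    cHf_comp_le_left hp (fun v => v.1) (fun v => (v.2.1, fun i : U => v.2.2 i.1))
      (fun u => u n)
  calc cHf p (fun v => v.1 n) (fun v => (v.2.1 n, fun i : U => v.2.2 i.1))
      ≤ cHf p (fun v => v.1 n) (fun v => (v.2.1, (v.2.1 n, fun i : U => v.2.2 i.1))) := main1
    _ = cHf p (fun v => v.1 n) (fun v => (v.2.1, fun i : U => v.2.2 i.1)) := main2
    _ ≤ cHf p (fun v => v.1) (fun v => (v.2.1, fun i : U => v.2.2 i.1)) := main3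

end Master

section Bridge
open MeasureTheory
variable {Ω : Type*} [MeasurableSpace Ω] {α β γ : Type*} [Fintype α] [Fintype β] [Fintype γ]

lemma bridge_disj (T : Ω → α) (s : Finset α) :
    (s : Set α).PairwiseDisjoint (fun v => T ⁻¹' {v}) := by
  intro v1 _ v2 _ hne
  refine Set.disjoint_left.2 fun ω h1 h2 => hne ?_
  have e1 : T ω = v1 := h1
  have e2 : T ω = v2 := h2
  rw [← e1, e2]

lemma bridge_rvH (ν : Measure Ω) [IsFiniteMeasure ν] (T : Ω → α)
    (hT : ∀ v : α, MeasurableSet (T ⁻¹' {v})) (f : α → β) :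
    rvH ν (fun ω => f (T ω)) = Hf (fun v => (ν (T ⁻¹' {v})).toReal) f := by
  unfold rvH Hf
  refine Finset.sum_congr rfl fun b _ => ?_
  congr 1
  have hset : (fun ω => f (T ω)) ⁻¹' {b}
      = ⋃ v ∈ (univ.filter (fun v => f v = b) : Finset α), T ⁻¹' {v} := by
    ext ω
    simp only [Set.mem_preimage, Set.mem_singleton_iff, Set.mem_iUnion, Finset.mem_filter,
      Finset.mem_univ, true_and]
    constructor
    · intro h
      exact ⟨T ω, h, rfl⟩
    · rintro ⟨v, hv, h⟩
      have : T ω = v := h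
      rw [this]
      exact hv
  rw [hset, measure_biUnion_finset (bridge_disj T _) (fun v _ => hT v)]
  rw [ENNReal.toReal_sum (fun v _ => measure_ne_top ν _)]
  unfold fsum
  exact Finset.sum_filter (fun v => f v = b) (fun v => (ν (T ⁻¹' {v})).toReal)

lemma bridge_sum_one (ν : Measure Ω) [IsProbabilityMeasure ν] (T : Ω → α)
    (hT : ∀ v : α, MeasurableSet (T ⁻¹' {v})) :
    ∑ v : α, (ν (T ⁻¹' {v})).toReal = 1 := by
  have hset : (Set.univ : Set Ω) = ⋃ v ∈ (univ : Finset α), T ⁻¹' {v} := by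
    ext ω
    simp
  calc ∑ v : α, (ν (T ⁻¹' {v})).toReal
      = (∑ v : α, ν (T ⁻¹' {v})).toReal :=
        (ENNReal.toReal_sum (fun v _ => measure_ne_top ν _)).symm
    _ = (ν (⋃ v ∈ (univ : Finset α), T ⁻¹' {v})).toReal := by
        rw [measure_biUnion_finset (bridge_disj T _) (fun v _ => hT v)]
    _ = (ν (Set.univ : Set Ω)).toReal := by rw [← hset]
    _ = 1 := by simp

lemma bridge_cond (ν : Measure Ω) [IsFiniteMeasure ν] (T : Ω → α)
    (hT : ∀ v : α, MeasurableSet (T ⁻¹' {v})) (fY : α → β) (fZ : α → γ) :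
    rvCondH ν (fun ω => fY (T ω)) (fun ω => fZ (T ω))
      = cHf (fun v => (ν (T ⁻¹' {v})).toReal) fY fZ := by
  have h1 : rvH ν (fun ω => (fY (T ω), fZ (T ω)))
      = Hf (fun v => (ν (T ⁻¹' {v})).toReal) (fun v => (fY v, fZ v)) :=
    bridge_rvH ν T hT (fun v => (fY v, fZ v))
  have h2 : rvH ν (fun ω => fZ (T ω)) = Hf (fun v => (ν (T ⁻¹' {v})).toReal) fZ :=
    bridge_rvH ν T hT fZ
  unfold rvCondH
  rw [h1, h2]
  rw [cHf_def]

lemma bridge_MI (ν : Measure Ω) [IsFiniteMeasure ν] (T : Ω → α)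
    (hT : ∀ v : α, MeasurableSet (T ⁻¹' {v})) (fY : α → β) (fZ : α → γ) :
    rvMI ν (fun ω => fY (T ω)) (fun ω => fZ (T ω))
      = Hf (fun v => (ν (T ⁻¹' {v})).toReal) fY
        + Hf (fun v => (ν (T ⁻¹' {v})).toReal) fZ
        - Hf (fun v => (ν (T ⁻¹' {v})).toReal) (fun v => (fY v, fZ v)) := by
  have h1 : rvH ν (fun ω => (fY (T ω), fZ (T ω)))
      = Hf (fun v => (ν (T ⁻¹' {v})).toReal) (fun v => (fY v, fZ v)) :=
    bridge_rvH ν T hT (fun v => (fY v, fZ v))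
  have h2 : rvH ν (fun ω => fZ (T ω)) = Hf (fun v => (ν (T ⁻¹' {v})).toReal) fZ :=
    bridge_rvH ν T hT fZ
  have h3 : rvH ν (fun ω => fY (T ω)) = Hf (fun v => (ν (T ⁻¹' {v})).toReal) fY :=
    bridge_rvH ν T hT fY
  unfold rvMI
  rw [h1, h2, h3]

end Bridge

end S5

/-- inequalities (47)–(52) of the converse proof: under privacy, determinism
and query independence, for any subset `U` of message indices and any two demands `w, w'`,
`H((A_1,…,A_N) | ((Q_1,…,Q_N), X_U) ; μ[|W = w]) ≥
 (1/N) · H((A_1,…,A_N) | ((Q_1,…,Q_N), X_U) ; μ[|W = w'])`. -/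
theorem stmt5 {Ω : Type*} [MeasurableSpace Ω] (μ : Measure Ω) [IsProbabilityMeasure μ]
    {𝒜 𝒬 𝒳 𝒲 : Type*} [Fintype 𝒜] [Fintype 𝒬] [Fintype 𝒳] [Fintype 𝒲]
    {N K : ℕ} (hN : 1 ≤ N)
    (A : Fin N → Ω → 𝒜) (Q : Fin N → Ω → 𝒬) (X : Fin K → Ω → 𝒳) (W : Ω → 𝒲)
    (hAm : ∀ n, DMeasurable (A n)) (hQm : ∀ n, DMeasurable (Q n))
    (hXm : ∀ i, DMeasurable (X i)) (hWm : DMeasurable W)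
    (hWpos : ∀ w : 𝒲, 0 < μ (W ⁻¹' {w}))
    (hpriv : ∀ n, rvIndep μ (fun ω => (A n ω, Q n ω, fun i : Fin K => X i ω)) W)
    (hdet : ∀ n (w : 𝒲),
      rvCondH (μ[|W ⁻¹' {w}]) (A n) (fun ω => (Q n ω, fun i : Fin K => X i ω)) = 0)
    (hqi : ∀ w : 𝒲,
      rvMI (μ[|W ⁻¹' {w}]) (fun ω (m : Fin N) => Q m ω) (fun ω (i : Fin K) => X i ω) = 0)
    (U : Finset (Fin K)) (w w' : 𝒲) :
    (1 / (N : ℝ)) *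
        rvCondH (μ[|W ⁻¹' {w'}]) (fun ω (n : Fin N) => A n ω)
          (fun ω => ((fun n : Fin N => Q n ω), fun i : U => X i.1 ω)) ≤
      rvCondH (μ[|W ⁻¹' {w}]) (fun ω (n : Fin N) => A n ω)
        (fun ω => ((fun n : Fin N => Q n ω), fun i : U => X i.1 ω)) := by
  classical
  have hWne : ∀ w0 : 𝒲, μ (W ⁻¹' {w0}) ≠ 0 := fun w0 => (hWpos w0).ne'
  haveI hPw : IsProbabilityMeasure (μ[|W ⁻¹' {w}]) :=
    ProbabilityTheory.cond_isProbabilityMeasure (hWne w)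
  haveI hPw' : IsProbabilityMeasure (μ[|W ⁻¹' {w'}]) :=
    ProbabilityTheory.cond_isProbabilityMeasure (hWne w')
  set T : Ω → (Fin N → 𝒜) × (Fin N → 𝒬) × (Fin K → 𝒳) :=
    fun ω => (fun n => A n ω, fun n => Q n ω, fun i => X i ω) with hT
  have hTm : ∀ v, MeasurableSet (T ⁻¹' {v}) := by
    intro v
    have hset : T ⁻¹' {v} = (⋂ n, A n ⁻¹' {v.1 n}) ∩
        ((⋂ n, Q n ⁻¹' {v.2.1 n}) ∩ (⋂ i, X i ⁻¹' {v.2.2 i})) := by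
      ext ω
      simp only [hT, Set.mem_preimage, Set.mem_singleton_iff, Set.mem_inter_iff, Set.mem_iInter,
        Prod.ext_iff, funext_iff]
    rw [hset]
    exact (MeasurableSet.iInter (fun n => hAm n {v.1 n})).inter
      ((MeasurableSet.iInter (fun n => hQm n {v.2.1 n})).inter
        (MeasurableSet.iInter (fun i => hXm i {v.2.2 i})))
  set p : (Fin N → 𝒜) × (Fin N → 𝒬) × (Fin K → 𝒳) → ℝ :=
    fun v => ((μ[|W ⁻¹' {w}]) (T ⁻¹' {v})).toReal with hp_def
  set p' : (Fin N → 𝒜) × (Fin N → 𝒬) × (Fin K → 𝒳) → ℝ :=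
    fun v => ((μ[|W ⁻¹' {w'}]) (T ⁻¹' {v})).toReal with hp'_def
  have hp : ∀ v, 0 ≤ p v := fun v => ENNReal.toReal_nonneg
  have hp'0 : ∀ v, 0 ≤ p' v := fun v => ENNReal.toReal_nonneg
  have hp1 : ∑ v, p v = 1 := S5.bridge_sum_one (μ[|W ⁻¹' {w}]) T hTm
  have hg : rvCondH (μ[|W ⁻¹' {w}]) (fun ω (n : Fin N) => A n ω)
      (fun ω => ((fun n : Fin N => Q n ω), fun i : U => X i.1 ω))
      = S5.cHf p (fun v => v.1) (fun v => (v.2.1, fun i : U => v.2.2 i.1)) :=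
    S5.bridge_cond (μ[|W ⁻¹' {w}]) T hTm (fun v => v.1)
      (fun v => (v.2.1, fun i : U => v.2.2 i.1))
  have hg' : rvCondH (μ[|W ⁻¹' {w'}]) (fun ω (n : Fin N) => A n ω)
      (fun ω => ((fun n : Fin N => Q n ω), fun i : U => X i.1 ω))
      = S5.cHf p' (fun v => v.1) (fun v => (v.2.1, fun i : U => v.2.2 i.1)) :=
    S5.bridge_cond (μ[|W ⁻¹' {w'}]) T hTm (fun v => v.1)
      (fun v => (v.2.1, fun i : U => v.2.2 i.1))
  have hdetp : ∀ n : Fin N, S5.cHf p (fun v => v.1 n) (fun v => (v.2.1 n, v.2.2)) = 0 := by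
    intro n
    have hb : rvCondH (μ[|W ⁻¹' {w}]) (A n) (fun ω => (Q n ω, fun i : Fin K => X i ω))
        = S5.cHf p (fun v => v.1 n) (fun v => (v.2.1 n, v.2.2)) :=
      S5.bridge_cond (μ[|W ⁻¹' {w}]) T hTm (fun v => v.1 n) (fun v => (v.2.1 n, v.2.2))
    rw [← hb]
    exact hdet n w
  have hqip : S5.Hf p (fun v => v.2.1) + S5.Hf p (fun v => v.2.2)
      - S5.Hf p (fun v => (v.2.1, v.2.2)) = 0 := by
    have hb : rvMI (μ[|W ⁻¹' {w}]) (fun ω (m : Fin N) => Q m ω) (fun ω (i : Fin K) => X i ω)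
        = S5.Hf p (fun v => v.2.1) + S5.Hf p (fun v => v.2.2)
          - S5.Hf p (fun v => (v.2.1, v.2.2)) :=
      S5.bridge_MI (μ[|W ⁻¹' {w}]) T hTm (fun v => v.2.1) (fun v => v.2.2)
    rw [← hb]
    exact hqi w
  have hpe : ∀ n : Fin N,
      S5.cHf p' (fun v => v.1 n) (fun v => (v.2.1 n, fun i : U => v.2.2 i.1))
      = S5.cHf p (fun v => v.1 n) (fun v => (v.2.1 n, fun i : U => v.2.2 i.1)) := by
    intro n
    set Tn : Ω → 𝒜 × 𝒬 × (Fin K → 𝒳) := fun ω => (A n ω, Q n ω, fun i => X i ω) with hTn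
    have hTnm : ∀ v, MeasurableSet (Tn ⁻¹' {v}) := by
      intro v
      have hset : Tn ⁻¹' {v} = (A n ⁻¹' {v.1}) ∩
          ((Q n ⁻¹' {v.2.1}) ∩ (⋂ i, X i ⁻¹' {v.2.2 i})) := by
        ext ω
        simp only [hTn, Set.mem_preimage, Set.mem_singleton_iff, Set.mem_inter_iff,
          Set.mem_iInter, Prod.ext_iff, funext_iff]
      rw [hset]
      exact (hAm n {v.1}).inter ((hQm n {v.2.1}).inter
        (MeasurableSet.iInter (fun i => hXm i {v.2.2 i})))
    have hdist : ∀ w0 : 𝒲, ∀ v, (μ[|W ⁻¹' {w0}]) (Tn ⁻¹' {v}) = μ (Tn ⁻¹' {v}) := by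
      intro w0 v
      rw [ProbabilityTheory.cond_apply (hWm {w0}), Set.inter_comm]
      have hpriv' : μ (Tn ⁻¹' {v} ∩ W ⁻¹' {w0}) = μ (Tn ⁻¹' {v}) * μ (W ⁻¹' {w0}) :=
        hpriv n v w0
      rw [hpriv', mul_comm (μ (Tn ⁻¹' {v})) (μ (W ⁻¹' {w0})), ← mul_assoc,
        ENNReal.inv_mul_cancel (hWne w0) (measure_ne_top μ _), one_mul]
    have e1 : rvCondH (μ[|W ⁻¹' {w'}]) (A n) (fun ω => (Q n ω, fun i : U => X i.1 ω))
        = S5.cHf (fun v => ((μ[|W ⁻¹' {w'}]) (Tn ⁻¹' {v})).toReal) (fun v => v.1)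
          (fun v => (v.2.1, fun i : U => v.2.2 i.1)) :=
      S5.bridge_cond (μ[|W ⁻¹' {w'}]) Tn hTnm (fun v => v.1)
        (fun v => (v.2.1, fun i : U => v.2.2 i.1))
    have e2 : rvCondH (μ[|W ⁻¹' {w}]) (A n) (fun ω => (Q n ω, fun i : U => X i.1 ω))
        = S5.cHf (fun v => ((μ[|W ⁻¹' {w}]) (Tn ⁻¹' {v})).toReal) (fun v => v.1)
          (fun v => (v.2.1, fun i : U => v.2.2 i.1)) :=
      S5.bridge_cond (μ[|W ⁻¹' {w}]) Tn hTnm (fun v => v.1)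
        (fun v => (v.2.1, fun i : U => v.2.2 i.1))
    have e3 : rvCondH (μ[|W ⁻¹' {w'}]) (A n) (fun ω => (Q n ω, fun i : U => X i.1 ω))
        = S5.cHf p' (fun v => v.1 n) (fun v => (v.2.1 n, fun i : U => v.2.2 i.1)) :=
      S5.bridge_cond (μ[|W ⁻¹' {w'}]) T hTm (fun v => v.1 n)
        (fun v => (v.2.1 n, fun i : U => v.2.2 i.1))
    have e4 : rvCondH (μ[|W ⁻¹' {w}]) (A n) (fun ω => (Q n ω, fun i : U => X i.1 ω))
        = S5.cHf p (fun v => v.1 n) (fun v => (v.2.1 n, fun i : U => v.2.2 i.1)) :=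
      S5.bridge_cond (μ[|W ⁻¹' {w}]) T hTm (fun v => v.1 n)
        (fun v => (v.2.1 n, fun i : U => v.2.2 i.1))
    have heq : (fun v => ((μ[|W ⁻¹' {w'}]) (Tn ⁻¹' {v})).toReal)
        = (fun v => ((μ[|W ⁻¹' {w}]) (Tn ⁻¹' {v})).toReal) := by
      funext v
      rw [hdist w' v, hdist w v]
    rw [← e3, e1, heq, ← e2, e4]
  have hA : S5.cHf p' (fun v => v.1) (fun v => (v.2.1, fun i : U => v.2.2 i.1)) ≤
      ∑ n : Fin N, S5.cHf p' (fun v => v.1 n) (fun v => (v.2.1 n, fun i : U => v.2.2 i.1)) :=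
    S5.chainA U p' hp'0
  have hB : ∀ n : Fin N,
      S5.cHf p (fun v => v.1 n) (fun v => (v.2.1 n, fun i : U => v.2.2 i.1)) ≤
      S5.cHf p (fun v => v.1) (fun v => (v.2.1, fun i : U => v.2.2 i.1)) :=
    fun n => S5.chainB U p hp hp1 hdetp hqip n
  rw [hg, hg']
  have tot : S5.cHf p' (fun v => v.1) (fun v => (v.2.1, fun i : U => v.2.2 i.1)) ≤
      (N : ℝ) * S5.cHf p (fun v => v.1) (fun v => (v.2.1, fun i : U => v.2.2 i.1)) := by
    calc S5.cHf p' (fun v => v.1) (fun v => (v.2.1, fun i : U => v.2.2 i.1))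
        ≤ ∑ n : Fin N, S5.cHf p' (fun v => v.1 n)
            (fun v => (v.2.1 n, fun i : U => v.2.2 i.1)) := hA
      _ = ∑ n : Fin N, S5.cHf p (fun v => v.1 n)
            (fun v => (v.2.1 n, fun i : U => v.2.2 i.1)) :=
          Finset.sum_congr rfl fun n _ => hpe n
      _ ≤ ∑ _n : Fin N, S5.cHf p (fun v => v.1)
            (fun v => (v.2.1, fun i : U => v.2.2 i.1)) :=
          Finset.sum_le_sum fun n _ => hB n
      _ = (N : ℝ) * S5.cHf p (fun v => v.1) (fun v => (v.2.1, fun i : U => v.2.2 i.1)) := by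
          rw [Finset.sum_const, Finset.card_univ, Fintype.card_fin, nsmul_eq_mul]
  have hNpos : (0 : ℝ) < N := by
    have : 0 < N := Nat.lt_of_lt_of_le Nat.zero_lt_one hN
    exact_mod_cast this
  calc (1 / (N : ℝ)) * S5.cHf p' (fun v => v.1) (fun v => (v.2.1, fun i : U => v.2.2 i.1))
      ≤ (1 / (N : ℝ)) *
        ((N : ℝ) * S5.cHf p (fun v => v.1) (fun v => (v.2.1, fun i : U => v.2.2 i.1))) := by
        apply mul_le_mul_of_nonneg_left tot
        positivity
    _ = S5.cHf p (fun v => v.1) (fun v => (v.2.1, fun i : U => v.2.2 i.1)) := by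
        field_simp
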